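/- Theorem (one-step subspace quality): Let 𝒱 ⊆ ℂ^n be a subspace, x a unit vector with x_⊥ = (I-P_V)x ≠ 0, and let v, ṽ be unit vectors orthogonal to 𝒱 with sin∠(v, x_⊥) ≠ 0 and with the angle ∠(ṽ, v) acute. Let ε̃ ≥ sin∠(ṽ, v) and suppose τ = 2ε̃ / sin∠(v, x_⊥) < 1. Then 1 - τ ≤ sin∠(𝒱̃₊, x) / sin∠(𝒱₊, x) ≤ 1 + τ, where 𝒱₊ = 𝒱 ⊕ span{v} and 𝒱̃₊ = 𝒱 ⊕ span{ṽ}. -/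

import Mathlib

local notation "⟪" x ", " y "⟫" => @inner ℂ _ _ x y

/-- `sin∠(a, w) = ‖(I - aaᴴ)w‖ / ‖w‖` for a unit vector `a` and a vector `w`. -/
noncomputable def sinAngle {E : Type*} [NormedAddCommGroup E] [InnerProductSpace ℂ E]
    (a w : E) : ℝ :=
  ‖w - ⟪a, w⟫ • a‖ / ‖w‖

private lemma rank_one_diff_bound {E : Type*} [NormedAddCommGroup E] [InnerProductSpace ℂ E]
    (v vt w : E) (hv : ‖v‖ = 1) (hvt : ‖vt‖ = 1) :
    ‖(w - ⟪vt, w⟫ • vt) - (w - ⟪v, w⟫ • v)‖ ≤ 2 * ‖vt - ⟪v, vt⟫ • v‖ * ‖w‖ := by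
  set c : ℂ := ⟪v, vt⟫ with hc
  set r : E := vt - c • v with hr
  have hid : (w - ⟪vt, w⟫ • vt) - (w - ⟪v, w⟫ • v)
      = -(⟪vt, w⟫ • r) - ⟪(starRingEnd ℂ c) • vt - v, w⟫ • v := by
    rw [inner_sub_left, inner_smul_left, starRingEnd_self_apply]
    rw [hr]
    simp only [smul_sub, sub_smul, smul_smul]
    module
  have hcc : (⟪vt, v⟫ : ℂ) = starRingEnd ℂ c := by rw [hc, ← inner_conj_symm]
  have h1 : ‖(starRingEnd ℂ c) • vt - v‖ ^ 2 = 1 - Complex.normSq c := by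
    rw [@norm_sub_sq ℂ, inner_smul_left, norm_smul, starRingEnd_self_apply, hcc,
      Complex.mul_conj']
    simp [hv, hvt, Complex.normSq_eq_norm_sq, ← Complex.ofReal_pow]
    ring
  have h2 : ‖r‖ ^ 2 = 1 - Complex.normSq c := by
    rw [hr, @norm_sub_sq ℂ, inner_smul_right, hcc, norm_smul, Complex.mul_conj]
    simp [hv, hvt, Complex.normSq_eq_norm_sq, ← Complex.ofReal_pow]
    ring
  have hnorm_eq : ‖(starRingEnd ℂ c) • vt - v‖ = ‖r‖ := by
    nlinarith [norm_nonneg ((starRingEnd ℂ c) • vt - v), norm_nonneg r, h1.trans h2.symm]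
  have hb1 : ‖⟪vt, w⟫ • r‖ ≤ ‖w‖ * ‖r‖ := by
    rw [norm_smul]
    have := norm_inner_le_norm (𝕜 := ℂ) vt w
    rw [hvt, one_mul] at this
    exact mul_le_mul_of_nonneg_right this (norm_nonneg r)
  have hb2 : ‖(⟪(starRingEnd ℂ c) • vt - v, w⟫ : ℂ) • v‖ ≤ ‖r‖ * ‖w‖ := by
    rw [norm_smul, hv, mul_one]
    calc ‖(⟪(starRingEnd ℂ c) • vt - v, w⟫ : ℂ)‖
        ≤ ‖(starRingEnd ℂ c) • vt - v‖ * ‖w‖ := norm_inner_le_norm _ _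
      _ = ‖r‖ * ‖w‖ := by rw [hnorm_eq]
  rw [hid]
  have := norm_sub_le (-(⟪vt, w⟫ • r)) ((⟪(starRingEnd ℂ c) • vt - v, w⟫ : ℂ) • v)
  rw [norm_neg] at this
  nlinarith [this]

private lemma proj_sup_span {E : Type*} [NormedAddCommGroup E] [InnerProductSpace ℂ E]
    [FiniteDimensional ℂ E] (K : Submodule ℂ E) (x v : E) (hv : ‖v‖ = 1) (hvK : v ∈ Kᗮ) :
    x - (Submodule.orthogonalProjectionOnto (K ⊔ Submodule.span ℂ {v}) x : E)
      = (x - (Submodule.orthogonalProjectionOnto K x : E))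
        - ⟪v, x - (Submodule.orthogonalProjectionOnto K x : E)⟫ • v := by
  set xp : E := x - (Submodule.orthogonalProjectionOnto K x : E) with hxp
  have hsplit : x - ((Submodule.orthogonalProjectionOnto K x : E) + ⟪v, xp⟫ • v) = xp - ⟪v, xp⟫ • v := by
    rw [hxp]; abel
  have hproj : (Submodule.orthogonalProjectionOnto (K ⊔ Submodule.span ℂ {v}) x : E)
      = (Submodule.orthogonalProjectionOnto K x : E) + ⟪v, xp⟫ • v := by
    rw [← Submodule.starProjection_apply]
    apply Submodule.eq_starProjection_of_mem_orthogonal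
    · exact Submodule.add_mem _ (Submodule.mem_sup_left (Submodule.orthogonalProjectionOnto K x).2)
        (Submodule.mem_sup_right (Submodule.smul_mem _ _ (Submodule.mem_span_singleton_self v)))
    · rw [← Submodule.inf_orthogonal, Submodule.mem_inf, hsplit]
      constructor
      · exact Submodule.sub_mem _ (Submodule.sub_starProjection_mem_orthogonal x)
          (Submodule.smul_mem _ _ hvK)
      · rw [Submodule.mem_orthogonal]
        intro u hu
        obtain ⟨a, rfl⟩ := Submodule.mem_span_singleton.1 hu
        rw [inner_smul_left, inner_sub_right, inner_smul_right]
        have : (⟪v, v⟫ : ℂ) = 1 := by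
          rw [@inner_self_eq_norm_sq_to_K ℂ, hv]; norm_num
        rw [this, mul_one, sub_self, mul_zero]
  rw [hproj, hsplit]

/-- Theorem 4, one-step subspace quality: if `sin∠(ṽ, v) ≤ ε̃` and
`τ = 2ε̃ / sin∠(v, x_⊥) < 1`, then
`1 - τ ≤ sin∠(𝒱̃₊, x) / sin∠(𝒱₊, x) ≤ 1 + τ`. -/
theorem one_step_subspace_quality {E : Type*} [NormedAddCommGroup E]
    [InnerProductSpace ℂ E] [FiniteDimensional ℂ E]
    (K : Submodule ℂ E) (x v vt : E)
    (hx : ‖x‖ = 1) (hv : ‖v‖ = 1) (hvt : ‖vt‖ = 1)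
    (hvK : v ∈ Kᗮ) (hvtK : vt ∈ Kᗮ)
    (hxp : x - (Submodule.orthogonalProjectionOnto K x : E) ≠ 0)
    (hsv : sinAngle v (x - (Submodule.orthogonalProjectionOnto K x : E)) ≠ 0)
    (εt τ : ℝ)
    (hεt : sinAngle v vt ≤ εt)
    (hτ : τ = 2 * εt / sinAngle v (x - (Submodule.orthogonalProjectionOnto K x : E)))
    (hτ1 : τ < 1) :
    1 - τ ≤ ‖x - (Submodule.orthogonalProjectionOnto (K ⊔ Submodule.span ℂ {vt}) x : E)‖
              / ‖x - (Submodule.orthogonalProjectionOnto (K ⊔ Submodule.span ℂ {v}) x : E)‖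
      ∧ ‖x - (Submodule.orthogonalProjectionOnto (K ⊔ Submodule.span ℂ {vt}) x : E)‖
          / ‖x - (Submodule.orthogonalProjectionOnto (K ⊔ Submodule.span ℂ {v}) x : E)‖ ≤ 1 + τ := by
  set xp : E := x - (Submodule.orthogonalProjectionOnto K x : E) with hxpdef
  set s : ℝ := ‖xp - ⟪v, xp⟫ • v‖ with hs
  set s' : ℝ := ‖xp - ⟪vt, xp⟫ • vt‖ with hs'
  set δ : ℝ := ‖vt - ⟪v, vt⟫ • v‖ with hδ
  have hxp_pos : 0 < ‖xp‖ := norm_pos_iff.2 hxp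
  have hδεt : δ ≤ εt := by
    have : sinAngle v vt = δ := by rw [sinAngle, hvt, div_one]
    linarith [hεt, this.symm.le]
  have hδ0 : (0 : ℝ) ≤ δ := norm_nonneg _
  have hεt0 : (0 : ℝ) ≤ εt := le_trans hδ0 hδεt
  have hsin_eq : sinAngle v xp = s / ‖xp‖ := rfl
  have hs_ne : s ≠ 0 := by
    intro h
    apply hsv
    rw [hsin_eq, h, zero_div]
  have hs_pos : 0 < s := lt_of_le_of_ne (norm_nonneg _) (Ne.symm hs_ne)
  have hτs : τ * s = 2 * εt * ‖xp‖ := by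
    rw [hτ, hsin_eq]
    field_simp
  have hdiff : |s' - s| ≤ τ * s := by
    rw [hτs]
    calc |s' - s| ≤ ‖(xp - ⟪vt, xp⟫ • vt) - (xp - ⟪v, xp⟫ • v)‖ := abs_norm_sub_norm_le _ _
      _ ≤ 2 * δ * ‖xp‖ := rank_one_diff_bound v vt xp hv hvt
      _ ≤ 2 * εt * ‖xp‖ := by nlinarith
  have hEq1 : x - (Submodule.orthogonalProjectionOnto (K ⊔ Submodule.span ℂ {v}) x : E)
      = xp - ⟪v, xp⟫ • v := proj_sup_span K x v hv hvK
  have hEq2 : x - (Submodule.orthogonalProjectionOnto (K ⊔ Submodule.span ℂ {vt}) x : E)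
      = xp - ⟪vt, xp⟫ • vt := proj_sup_span K x vt hvt hvtK
  rw [hEq1, hEq2, ← hs, ← hs']
  have h1 := (abs_le.1 hdiff).1
  have h2 := (abs_le.1 hdiff).2
  constructor
  · rw [le_div_iff₀ hs_pos]; nlinarith
  · rw [div_le_iff₀ hs_pos]; nlinarith
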